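/- Let A be a 2n×2n real symplectic matrix (A ∈ Sp(2n)), regarded as a complex matrix, let λ ∈ ℂ with |λ| = 1 be an eigenvalue of A that is a simple root of the characteristic polynomial of A, and let v ∈ ℂ^{2n} be a nonzero vector with A v = λ v. Then β(v, v) is a nonzero real number. -/

import Mathlib

open Matrix Polynomial

variable {m : Type*} [Fintype m] [DecidableEq m]

lemma pow_mulVec_eig (M : Matrix m m ℂ) (μ : ℂ) (u : m → ℂ)
    (h : M *ᵥ u = μ • u) (k : ℕ) : (M ^ k) *ᵥ u = (μ ^ k) • u := by
  induction k with
  | zero => simp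
  | succ k ih =>
      rw [pow_succ', ← Matrix.mulVec_mulVec, ih, Matrix.mulVec_smul, h,
        smul_smul, ← pow_succ]

lemma aeval_mulVec_eig (M : Matrix m m ℂ) (μ : ℂ) (u : m → ℂ)
    (h : M *ᵥ u = μ • u) (s : ℂ[X]) :
    (aeval M s) *ᵥ u = s.eval μ • u := by
  induction s using Polynomial.induction_on' with
  | add p q hp hq => rw [map_add, Matrix.add_mulVec, hp, hq, eval_add, add_smul]
  | monomial k a =>
      rw [aeval_monomial, eval_monomial, Algebra.algebraMap_eq_smul_one,
        smul_mul_assoc, one_mul, Matrix.smul_mulVec, pow_mulVec_eig M μ u h k,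
        smul_smul]

lemma aeval_transpose (M : Matrix m m ℂ) (s : ℂ[X]) :
    (aeval M s)ᵀ = aeval Mᵀ s := by
  induction s using Polynomial.induction_on' with
  | add p q hp hq => rw [map_add, Matrix.transpose_add, hp, hq, map_add]
  | monomial k a =>
      rw [aeval_monomial, aeval_monomial, Algebra.algebraMap_eq_smul_one,
        smul_mul_assoc, one_mul, Matrix.transpose_smul, Matrix.transpose_pow,
        smul_mul_assoc, one_mul]

lemma charpoly_shift (M : Matrix m m ℂ) (μ : ℂ) :
    (M - μ • 1).charpoly = (M.charpoly).comp (X + C μ) := by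
  have h : (M - μ • 1).charmatrix = (M.charmatrix).map (eval₂RingHom C (X + C μ)) := by
    ext i j
    by_cases hij : i = j
    · subst hij
      simp [charmatrix_apply_eq, Matrix.sub_apply, Matrix.smul_apply, Matrix.one_apply_eq,
        map_sub, eval₂_X, eval₂_C, C_sub]
      ring
    · simp [charmatrix_apply_ne _ _ _ hij, Matrix.sub_apply, Matrix.smul_apply,
        Matrix.one_apply_ne hij, eval₂_C]
  rw [Matrix.charpoly, Matrix.charpoly, h, ← RingHom.mapMatrix_apply, ← RingHom.map_det]
  simp [Polynomial.comp, coe_eval₂RingHom]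

lemma charpoly_toLin' (M : Matrix m m ℂ) :
    (Matrix.toLin' M : Module.End ℂ (m → ℂ)).charpoly = M.charpoly := by
  rw [← LinearMap.charpoly_toMatrix (Matrix.toLin' M) (Pi.basisFun ℂ m),
    LinearMap.toMatrix_eq_toMatrix', LinearMap.toMatrix'_toLin']

lemma eig_span (M : Matrix m m ℂ) (μ : ℂ) (v : m → ℂ) (hv : v ≠ 0)
    (hmul : M.charpoly.rootMultiplicity μ = 1)
    (heig : M *ᵥ v = μ • v) :
    ∀ u, M *ᵥ u = μ • u → ∃ c : ℂ, u = c • v := by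
  set f : Module.End ℂ (m → ℂ) := Matrix.toLin' M with hf
  have hfs : f - μ • 1 = Matrix.toLin' (M - μ • 1) := by
    ext x
    simp [hf, Matrix.toLin'_apply, Matrix.sub_mulVec, Matrix.smul_mulVec]
  have hmem : ∀ u, M *ᵥ u = μ • u → u ∈ f.maxGenEigenspace μ := by
    intro u hu
    rw [Module.End.mem_maxGenEigenspace]
    exact ⟨1, by simp [pow_one, hf, Matrix.toLin'_apply, hu]⟩
  have hrank : Module.finrank ℂ (f.maxGenEigenspace μ) = 1 := by
    have h0 : f.maxGenEigenspace μ = (f - μ • 1).maxGenEigenspace 0 := by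
      ext x
      rw [Module.End.mem_maxGenEigenspace, Module.End.mem_maxGenEigenspace]
      simp
    rw [h0, LinearMap.finrank_maxGenEigenspace_zero_eq, hfs, _root_.charpoly_toLin', charpoly_shift,
      ← Polynomial.rootMultiplicity_eq_natTrailingDegree, hmul]
  have hspan : (Submodule.span ℂ {v}) = f.maxGenEigenspace μ := by
    apply Submodule.eq_of_le_of_finrank_le
    · rw [Submodule.span_le, Set.singleton_subset_iff]
      exact hmem v heig
    · rw [hrank, finrank_span_singleton hv]
  intro u hu
  have := hmem u hu
  rw [← hspan, Submodule.mem_span_singleton] at this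
  obtain ⟨c, hc⟩ := this
  exact ⟨c, hc.symm⟩

omit [Fintype m] [DecidableEq m] in
lemma map_mulVec_star {m' : Type*} [Fintype m'] (C : Matrix m m' ℝ) (x : m' → ℂ) :
    (C.map Complex.ofReal) *ᵥ (star x) = star ((C.map Complex.ofReal) *ᵥ x) := by
  ext i
  simp only [Matrix.mulVec, dotProduct, Pi.star_apply, star_sum, star_mul',
    Matrix.map_apply, Complex.star_def, Complex.conj_ofReal]

lemma J_map_ofReal (n : ℕ) :
    (Matrix.J (Fin n) ℝ).map Complex.ofReal = Matrix.J (Fin n) ℂ := by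
  ext i j
  cases i <;> cases j <;>
    · simp [Matrix.J, Matrix.fromBlocks, Matrix.map_apply, Matrix.one_apply,
        apply_ite Complex.ofReal]

/-- The Hermitian form `β(v, w) = -i (w̄)ᵀ J v` on `ℂ^{2n}`. -/
noncomputable def betaForm (n : ℕ) (v w : (Fin n ⊕ Fin n) → ℂ) : ℂ :=
  -Complex.I * (star w ⬝ᵥ (Matrix.J (Fin n) ℂ *ᵥ v))

set_option maxHeartbeats 1000000 in
/-- If `A ∈ Sp(2n)` has a simple eigenvalue `λ ∈ S¹` with eigenvector `v`, then
`β(v, v)` is a nonzero real number. -/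
theorem stmt0 (n : ℕ) (A : Matrix (Fin n ⊕ Fin n) (Fin n ⊕ Fin n) ℝ)
    (hA : Aᵀ * Matrix.J (Fin n) ℝ * A = Matrix.J (Fin n) ℝ)
    (lam : ℂ) (hlam : ‖lam‖ = 1)
    (hsimple : ((A.map (Complex.ofReal)).charpoly).rootMultiplicity lam = 1)
    (v : (Fin n ⊕ Fin n) → ℂ) (hv : v ≠ 0)
    (heig : (A.map (Complex.ofReal)) *ᵥ v = lam • v) :
    ∃ r : ℝ, r ≠ 0 ∧ betaForm n v v = (r : ℂ) := by
  set B : Matrix (Fin n ⊕ Fin n) (Fin n ⊕ Fin n) ℂ := A.map Complex.ofReal with hB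
  set Jc : Matrix (Fin n ⊕ Fin n) (Fin n ⊕ Fin n) ℂ := Matrix.J (Fin n) ℂ with hJc
  have hJmap : (Matrix.J (Fin n) ℝ).map Complex.ofReal = Jc := J_map_ofReal n
  -- complexified symplectic relation
  have hcoe : ⇑(Complex.ofRealHom : ℝ →+* ℂ) = Complex.ofReal := rfl
  have h2 : Bᵀ * Jc * B = Jc := by
    rw [hB, ← hJmap]
    simp only [← hcoe, ← Matrix.transpose_map, ← Matrix.map_mul]
    rw [hA]
  -- conjugate eigenvector
  have hstar_eig : B *ᵥ (star v) = (starRingEnd ℂ) lam • star v := by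
    rw [hB, map_mulVec_star A v, ← hB, heig, star_smul]
    rfl
  have hunit : (starRingEnd ℂ) lam * lam = 1 := by
    rw [mul_comm, Complex.mul_conj, Complex.normSq_eq_norm_sq, hlam]
    norm_num
  set l : (Fin n ⊕ Fin n) → ℂ := Jc *ᵥ (star v) with hl
  -- l is an eigenvector of Bᵀ with eigenvalue lam
  have hBt : Bᵀ *ᵥ l = lam • l := by
    have h := congrArg (fun M => M *ᵥ (star v)) h2
    simp only [← Matrix.mulVec_mulVec] at h
    rw [hstar_eig, Matrix.mulVec_smul, Matrix.mulVec_smul, ← hl] at h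
    calc Bᵀ *ᵥ l = (lam * (starRingEnd ℂ) lam) • (Bᵀ *ᵥ (Jc *ᵥ (star v))) := by
          rw [mul_comm, hunit, one_smul, hl]
      _ = lam • ((starRingEnd ℂ) lam • (Bᵀ *ᵥ (Jc *ᵥ (star v)))) := by rw [← smul_smul]
      _ = lam • l := by rw [h]
  have hlne : l ≠ 0 := by
    intro h0
    apply hv
    have h1 : Jc *ᵥ l = 0 := by rw [h0, Matrix.mulVec_zero]
    rw [hl, Matrix.mulVec_mulVec, hJc, Matrix.J_squared, Matrix.neg_mulVec,
      Matrix.one_mulVec, neg_eq_zero, star_eq_zero] at h1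
    exact h1
  set s : ℂ := star v ⬝ᵥ (Jc *ᵥ v) with hs
  have hlv : l ⬝ᵥ v = star s := by
    rw [hs, Matrix.star_dotProduct, star_star, hl]
    congr 1
    rw [← hJmap, map_mulVec_star]
  have hss : star s = -s := by
    rw [← hlv, hl, dotProduct_comm, Matrix.dotProduct_mulVec,
      ← Matrix.mulVec_transpose, hJc, Matrix.J_transpose, Matrix.neg_mulVec,
      neg_dotProduct, ← hJc, hs, dotProduct_comm]
  -- main: s ≠ 0
  have hsne : s ≠ 0 := by
    intro hs0
    -- then l ⬝ᵥ v = 0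
    have hlv0 : l ⬝ᵥ v = 0 := by rw [hlv, hs0, star_zero]
    set p : Polynomial ℂ := B.charpoly with hp
    have hpfac : (Polynomial.X - Polynomial.C lam) * (p /ₘ (Polynomial.X - Polynomial.C lam)) = p := by
      have h := Polynomial.pow_mul_divByMonic_rootMultiplicity_eq p lam
      rwa [hsimple, pow_one] at h
    have hqlam : (p /ₘ (Polynomial.X - Polynomial.C lam)).eval lam ≠ 0 := by
      have h := Polynomial.eval_divByMonic_pow_rootMultiplicity_ne_zero lam
        ((Matrix.charpoly_monic B).ne_zero : p ≠ 0)
      rwa [hsimple, pow_one] at h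
    set q : Polynomial ℂ := p /ₘ (Polynomial.X - Polynomial.C lam) with hq
    set Q : Matrix (Fin n ⊕ Fin n) (Fin n ⊕ Fin n) ℂ := Polynomial.aeval B q with hQ
    have hBQ : (B - lam • 1) * Q = 0 := by
      have h1 : Polynomial.aeval B (Polynomial.X - Polynomial.C lam) = B - lam • 1 := by
        simp [Algebra.algebraMap_eq_smul_one]
      rw [hQ, ← h1, ← _root_.map_mul, hpfac, hp, Matrix.aeval_self_charpoly]
    -- every Q *ᵥ x is an eigenvector
    have hQeig : ∀ x, B *ᵥ (Q *ᵥ x) = lam • (Q *ᵥ x) := by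
      intro x
      have h1 : ((B - lam • 1) * Q) *ᵥ x = 0 := by rw [hBQ, Matrix.zero_mulVec]
      rw [← Matrix.mulVec_mulVec, Matrix.sub_mulVec, Matrix.smul_mulVec,
        Matrix.one_mulVec, sub_eq_zero] at h1
      exact h1
    have hspan := eig_span B lam v hv (hB ▸ hsimple) heig
    -- Qᵀ *ᵥ l = q(lam) • l
    have hQl : Qᵀ *ᵥ l = q.eval lam • l := by
      rw [hQ, aeval_transpose]
      exact aeval_mulVec_eig Bᵀ lam l hBt q
    -- conclude l = 0
    apply hlne
    funext i
    have hx : ∀ x, l ⬝ᵥ x = 0 := by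
      intro x
      obtain ⟨c, hc⟩ := hspan (Q *ᵥ x) (hQeig x)
      have h1 : l ⬝ᵥ (Q *ᵥ x) = 0 := by
        rw [hc, dotProduct_smul, hlv0, smul_zero]
      rw [Matrix.dotProduct_mulVec, ← Matrix.mulVec_transpose, hQl,
        smul_dotProduct, smul_eq_mul, mul_eq_zero] at h1
      exact h1.resolve_left hqlam
    have := hx (Pi.single i 1)
    rwa [dotProduct_single, mul_one] at this
  -- wrap up
  have hbeta : betaForm n v v = -Complex.I * s := by rw [betaForm, ← hJc, ← hs]
  have hreal : (starRingEnd ℂ) (betaForm n v v) = betaForm n v v := by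
    rw [hbeta, _root_.map_mul, map_neg, Complex.conj_I,
      show (starRingEnd ℂ) s = star s from rfl, hss]
    ring
  refine ⟨(betaForm n v v).re, ?_, ?_⟩
  · intro h0
    have hb0 : betaForm n v v = 0 := by
      rw [← Complex.conj_eq_iff_re.mp hreal, h0, Complex.ofReal_zero]
    rw [hbeta] at hb0
    apply hsne
    have := mul_eq_zero.mp hb0
    simpa [Complex.I_ne_zero] using this
  · exact (Complex.conj_eq_iff_re.mp hreal).symm
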